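/- Failure of Kolchin's theorem in positive characteristic: Let k be an algebraically closed field of characteristic p > 0 and let f = x·y^p − z^p ∈ MvPolynomial (Fin 3) k, with the three variables denoted x, y, z (note f is irreducible). Then in the arc algebra A∞((f)): (1) the ideal generated by the images of all the variables y^{(i)} and z^{(i)} (for all i ∈ ℕ) is a minimal prime of A∞((f)) — i.e. the set of arcs lying entirely in the singular locus y = z = 0 is an irreducible component of the arc space — and (2) PrimeSpectrum (A∞((f))) is not an irreducible topological space. -/

import Mathlib

open MvPolynomial

/-- The universal arc `e : k[x_1,…,x_n] → (k[x_j^{(i)}])[[t]]`, sending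
`x_j` to `Σ_{i ≥ 0} x_j^{(i)} t^i`. -/
noncomputable def univArc (k : Type*) [CommRing k] (n : ℕ) :
    MvPolynomial (Fin n) k →ₐ[k] PowerSeries (MvPolynomial (Fin n × ℕ) k) :=
  MvPolynomial.aeval fun j => PowerSeries.mk fun i => MvPolynomial.X (j, i)

/-- The ideal of the arc space of `V(I)`: generated by all `t`-coefficients of `e f`, `f ∈ I`. -/
noncomputable def arcIdeal {k : Type*} [CommRing k] {n : ℕ}
    (I : Ideal (MvPolynomial (Fin n) k)) : Ideal (MvPolynomial (Fin n × ℕ) k) :=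
  Ideal.span {g | ∃ f ∈ I, ∃ i : ℕ, g = PowerSeries.coeff i (univArc k n f)}

/-- The arc algebra `A∞(I)`. -/
noncomputable abbrev ArcAlgebra {k : Type*} [CommRing k] {n : ℕ}
    (I : Ideal (MvPolynomial (Fin n) k)) : Type _ :=
  MvPolynomial (Fin n × ℕ) k ⧸ arcIdeal I

/-- The map `σ : k[x_1,…,x_n] → k[x_j^{(i)}]` recording the initial point of an arc. -/
noncomputable def initialPoint (k : Type*) [CommRing k] (n : ℕ) :
    MvPolynomial (Fin n) k →ₐ[k] MvPolynomial (Fin n × ℕ) k :=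
  MvPolynomial.aeval fun j => MvPolynomial.X (j, 0)


namespace KolchinAux

open PowerSeries

variable {k : Type*} [Field k]

/-- The generating set {y^(i), z^(i)}. -/
def genSet (k : Type*) [Field k] : Set (MvPolynomial (Fin 3 × ℕ) k) :=
  {g | ∃ i : ℕ, g = MvPolynomial.X ((1 : Fin 3), i) ∨ g = MvPolynomial.X ((2 : Fin 3), i)}

noncomputable def Qid (k : Type*) [Field k] : Ideal (MvPolynomial (Fin 3 × ℕ) k) :=
  Ideal.span (genSet k)

noncomputable def phi (k : Type*) [Field k] :
    MvPolynomial (Fin 3 × ℕ) k →ₐ[k] MvPolynomial ℕ k :=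
  aeval fun v => if v.1 = 0 then MvPolynomial.X v.2 else 0

noncomputable def psi (k : Type*) [Field k] :
    MvPolynomial ℕ k →ₐ[k] MvPolynomial (Fin 3 × ℕ) k :=
  aeval fun i => MvPolynomial.X ((0 : Fin 3), i)

lemma Qid_eq_ker : Qid k = RingHom.ker (phi k).toRingHom := by
  refine le_antisymm (Ideal.span_le.mpr ?_) ?_
  · rintro g ⟨i, rfl | rfl⟩ <;>
      simp [RingHom.mem_ker, phi, aeval_X, show ((1:Fin 3) ≠ 0) by decide,
        show ((2:Fin 3) ≠ 0) by decide]
  · intro g hg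
    have h : (Ideal.Quotient.mkₐ k (Qid k)).comp ((psi k).comp (phi k)) =
        Ideal.Quotient.mkₐ k (Qid k) := by
      apply MvPolynomial.algHom_ext
      rintro ⟨j, i⟩
      fin_cases j
      · simp [phi, psi, aeval_X]
      · simp only [AlgHom.comp_apply, phi, psi, aeval_X]
        rw [if_neg (by decide), map_zero, map_zero]
        exact (Ideal.Quotient.eq_zero_iff_mem.mpr
          (Ideal.subset_span (by exact ⟨i, Or.inl rfl⟩))).symm
      · simp only [AlgHom.comp_apply, phi, psi, aeval_X]
        rw [if_neg (by decide), map_zero, map_zero]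
        exact (Ideal.Quotient.eq_zero_iff_mem.mpr
          (Ideal.subset_span (by exact ⟨i, Or.inr rfl⟩))).symm
    have hg0 : phi k g = 0 := hg
    have := AlgHom.congr_fun h g
    simp only [AlgHom.comp_apply, hg0, map_zero] at this
    rw [Ideal.Quotient.mkₐ_eq_mk] at this
    exact Ideal.Quotient.eq_zero_iff_mem.mp this.symm

lemma Qid_isPrime : (Qid k).IsPrime := by
  rw [Qid_eq_ker]; exact RingHom.ker_isPrime _

lemma X0_not_mem_Qid (j : ℕ) : MvPolynomial.X ((0 : Fin 3), j) ∉ Qid k := by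
  rw [Qid_eq_ker]
  simp [RingHom.mem_ker, phi, aeval_X, MvPolynomial.X_ne_zero]


lemma coeff_mul_mem {S : Type*} [CommRing S] (Q : Ideal S) (A B : PowerSeries S)
    (h : ∀ i, PowerSeries.coeff i A ∈ Q) (i : ℕ) :
    PowerSeries.coeff i (A * B) ∈ Q := by
  rw [PowerSeries.coeff_mul]
  exact Ideal.sum_mem _ fun c _ => Ideal.mul_mem_right _ _ (h c.1)

lemma arcIdeal_le {n : ℕ} (f : MvPolynomial (Fin n) k)
    (Q : Ideal (MvPolynomial (Fin n × ℕ) k))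
    (h : ∀ m, PowerSeries.coeff m (univArc k n f) ∈ Q) :
    arcIdeal (Ideal.span {f}) ≤ Q := by
  rw [arcIdeal, Ideal.span_le]
  rintro g ⟨h', hh', m, rfl⟩
  rw [Ideal.mem_span_singleton] at hh'
  obtain ⟨c, rfl⟩ := hh'
  rw [map_mul]
  exact coeff_mul_mem Q _ _ h m

lemma univArc_f (p : ℕ) :
    univArc k 3 (MvPolynomial.X 0 * MvPolynomial.X 1 ^ p - MvPolynomial.X 2 ^ p) =
      (PowerSeries.mk fun i => MvPolynomial.X ((0 : Fin 3), i)) *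
        (PowerSeries.mk fun i => MvPolynomial.X ((1 : Fin 3), i)) ^ p -
        (PowerSeries.mk fun i => MvPolynomial.X ((2 : Fin 3), i)) ^ p := by
  simp only [univArc, map_sub, map_mul, map_pow, aeval_X]

lemma map_mk {S T : Type*} [CommRing S] [CommRing T] (g : S →+* T) (h : ℕ → S) :
    PowerSeries.map g (PowerSeries.mk h) = PowerSeries.mk fun i => g (h i) := by
  ext n
  simp [PowerSeries.coeff_map, PowerSeries.coeff_mk]

lemma coeff_univArc_mem (p : ℕ) (hp : 0 < p) (m : ℕ) :
    PowerSeries.coeff m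
      (univArc k 3 (MvPolynomial.X 0 * MvPolynomial.X 1 ^ p - MvPolynomial.X 2 ^ p)) ∈
      Qid k := by
  rw [univArc_f]
  obtain ⟨q, rfl⟩ : ∃ q, p = q + 1 := ⟨p - 1, (Nat.succ_pred_eq_of_pos hp).symm⟩
  set A := PowerSeries.mk fun i => MvPolynomial.X (R := k) ((0 : Fin 3), i)
  set B := PowerSeries.mk fun i => MvPolynomial.X (R := k) ((1 : Fin 3), i)
  set C := PowerSeries.mk fun i => MvPolynomial.X (R := k) ((2 : Fin 3), i)
  have hB : ∀ i, PowerSeries.coeff i B ∈ Qid k := fun i => by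
    rw [PowerSeries.coeff_mk]
    exact Ideal.subset_span (by exact ⟨i, Or.inl rfl⟩)
  have hC : ∀ i, PowerSeries.coeff i C ∈ Qid k := fun i => by
    rw [PowerSeries.coeff_mk]
    exact Ideal.subset_span (by exact ⟨i, Or.inr rfl⟩)
  have e1 : A * B ^ (q + 1) = B * (A * B ^ q) := by ring
  have e2 : C ^ (q + 1) = C * C ^ q := by ring
  rw [map_sub, e1, e2]
  exact sub_mem (coeff_mul_mem _ _ _ hB m) (coeff_mul_mem _ _ _ hC m)

lemma arcIdeal_le_Qid (p : ℕ) (hp : 0 < p) (f : MvPolynomial (Fin 3) k)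
    (hf : f = MvPolynomial.X 0 * MvPolynomial.X 1 ^ p - MvPolynomial.X 2 ^ p) :
    arcIdeal (Ideal.span {f}) ≤ Qid k := by
  subst hf
  exact arcIdeal_le _ _ (coeff_univArc_mem p hp)

/-- evaluation at the constant arc (1,1,1) -/
noncomputable def ev (k : Type*) [Field k] : MvPolynomial (Fin 3 × ℕ) k →ₐ[k] k :=
  aeval fun v => if v.2 = 0 then 1 else 0

noncomputable def Mid (k : Type*) [Field k] : Ideal (MvPolynomial (Fin 3 × ℕ) k) :=
  RingHom.ker (ev k).toRingHom

lemma Mid_isPrime : (Mid k).IsPrime := RingHom.ker_isPrime _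

lemma X10_not_mem_Mid : MvPolynomial.X ((1 : Fin 3), 0) ∉ Mid k := by
  simp [Mid, RingHom.mem_ker, ev, aeval_X]

lemma arcIdeal_le_Mid (p : ℕ) (hp : 0 < p) (f : MvPolynomial (Fin 3) k)
    (hf : f = MvPolynomial.X 0 * MvPolynomial.X 1 ^ p - MvPolynomial.X 2 ^ p) :
    arcIdeal (Ideal.span {f}) ≤ Mid k := by
  subst hf
  refine arcIdeal_le _ _ fun m => ?_
  have hone : (PowerSeries.mk fun i => if i = 0 then (1 : k) else 0) = 1 := by
    ext n
    simp [PowerSeries.coeff_mk, PowerSeries.coeff_one]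
  show (ev k) _ = 0
  have : (ev k) (PowerSeries.coeff m
      (univArc k 3 (MvPolynomial.X 0 * MvPolynomial.X 1 ^ p - MvPolynomial.X 2 ^ p))) =
      PowerSeries.coeff m (PowerSeries.map (ev k).toRingHom
        (univArc k 3 (MvPolynomial.X 0 * MvPolynomial.X 1 ^ p - MvPolynomial.X 2 ^ p))) := by
    rw [PowerSeries.coeff_map]; rfl
  rw [this, univArc_f, map_sub, map_mul, map_pow, map_pow, map_mk, map_mk, map_mk]
  have e0 : (fun i => (ev k).toRingHom (MvPolynomial.X ((0 : Fin 3), i))) =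
      fun i => if i = 0 then (1:k) else 0 := by funext i; simp [ev, aeval_X]
  have e1 : (fun i => (ev k).toRingHom (MvPolynomial.X ((1 : Fin 3), i))) =
      fun i => if i = 0 then (1:k) else 0 := by funext i; simp [ev, aeval_X]
  have e2 : (fun i => (ev k).toRingHom (MvPolynomial.X ((2 : Fin 3), i))) =
      fun i => if i = 0 then (1:k) else 0 := by funext i; simp [ev, aeval_X]
  rw [e0, e1, e2, hone]
  simp


lemma core (p : ℕ) (hp : 0 < p) (hpk : ((p : ℕ) : k) = 0) (f : MvPolynomial (Fin 3) k)
    (hf : f = MvPolynomial.X 0 * MvPolynomial.X 1 ^ p - MvPolynomial.X 2 ^ p)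
    (P' : Ideal (MvPolynomial (Fin 3 × ℕ) k)) [hP' : P'.IsPrime]
    (hJ : arcIdeal (Ideal.span {f}) ≤ P') (hQ : P' ≤ Qid k) : Qid k ≤ P' := by
  classical
  set D := MvPolynomial (Fin 3 × ℕ) k ⧸ P' with hD
  let π : MvPolynomial (Fin 3 × ℕ) k →+* D := Ideal.Quotient.mk P'
  have hπ0 : ∀ j : ℕ, π (MvPolynomial.X ((0 : Fin 3), j)) ≠ 0 := by
    intro j h
    exact X0_not_mem_Qid j (hQ (Ideal.Quotient.eq_zero_iff_mem.mp h))
  have hpD : ((p : ℕ) : D) = 0 := by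
    have : ((p : ℕ) : D) = algebraMap k D ((p : ℕ) : k) := (map_natCast (algebraMap k D) p).symm
    rw [this, hpk, map_zero]
  set A : PowerSeries D := PowerSeries.mk fun j => π (MvPolynomial.X ((0 : Fin 3), j)) with hA
  set B : PowerSeries D := PowerSeries.mk fun j => π (MvPolynomial.X ((1 : Fin 3), j)) with hB
  set C : PowerSeries D := PowerSeries.mk fun j => π (MvPolynomial.X ((2 : Fin 3), j)) with hC
  have hrel : A * B ^ p = C ^ p := by
    have h0 : PowerSeries.map π (univArc k 3 f) = 0 := by
      ext m
      rw [PowerSeries.coeff_map, map_zero]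
      exact Ideal.Quotient.eq_zero_iff_mem.mpr
        (hJ (Ideal.subset_span (by exact ⟨f, Ideal.mem_span_singleton_self f, m, rfl⟩)))
    rw [hf, univArc_f, map_sub, map_mul, map_pow, map_pow, map_mk, map_mk, map_mk] at h0
    rw [hA, hB, hC]
    exact sub_eq_zero.mp h0
  have key : ∀ i : ℕ, π (MvPolynomial.X ((1 : Fin 3), i)) = 0 ∧
      π (MvPolynomial.X ((2 : Fin 3), i)) = 0 := by
    intro i
    induction i using Nat.strong_induction_on with
    | _ i IH =>
      obtain ⟨B2, hB2⟩ : (PowerSeries.X : PowerSeries D) ^ i ∣ B :=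
        PowerSeries.X_pow_dvd_iff.mpr fun m hm => by
          rw [hB, PowerSeries.coeff_mk]; exact (IH m hm).1
      obtain ⟨C2, hC2⟩ : (PowerSeries.X : PowerSeries D) ^ i ∣ C :=
        PowerSeries.X_pow_dvd_iff.mpr fun m hm => by
          rw [hC, PowerSeries.coeff_mk]; exact (IH m hm).2
      have hrel2 : A * B2 ^ p = C2 ^ p := by
        have h' : PowerSeries.X ^ (i * p) * (A * B2 ^ p) =
            PowerSeries.X ^ (i * p) * C2 ^ p := by
          rw [hB2, hC2] at hrel
          linear_combination hrel
        exact mul_left_cancel₀ (pow_ne_zero _ PowerSeries.X_ne_zero) h'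
      have hbi : π (MvPolynomial.X ((1 : Fin 3), i)) = PowerSeries.constantCoeff B2 := by
        have h1 : PowerSeries.coeff (0 + i) (PowerSeries.X ^ i * B2) =
            PowerSeries.coeff 0 B2 := PowerSeries.coeff_X_pow_mul B2 i 0
        rw [zero_add] at h1
        have h2 : π (MvPolynomial.X ((1 : Fin 3), i)) = PowerSeries.coeff i B := by
          rw [hB, PowerSeries.coeff_mk]
        rw [h2, hB2, h1, PowerSeries.coeff_zero_eq_constantCoeff_apply]
      have hci : π (MvPolynomial.X ((2 : Fin 3), i)) = PowerSeries.constantCoeff C2 := by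
        have h1 : PowerSeries.coeff (0 + i) (PowerSeries.X ^ i * C2) =
            PowerSeries.coeff 0 C2 := PowerSeries.coeff_X_pow_mul C2 i 0
        rw [zero_add] at h1
        have h2 : π (MvPolynomial.X ((2 : Fin 3), i)) = PowerSeries.coeff i C := by
          rw [hC, PowerSeries.coeff_mk]
        rw [h2, hC2, h1, PowerSeries.coeff_zero_eq_constantCoeff_apply]
      -- look at coefficient 1
      have h1 : PowerSeries.coeff 1 (A * B2 ^ p) = PowerSeries.coeff 1 (C2 ^ p) := by
        rw [hrel2]
      rw [PowerSeries.coeff_one_mul, PowerSeries.coeff_one_pow, PowerSeries.coeff_one_pow,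
        hpD] at h1
      simp only [zero_mul, mul_zero, add_zero, map_pow] at h1
      have hA1 : PowerSeries.coeff 1 A = π (MvPolynomial.X ((0 : Fin 3), 1)) := by
        rw [hA, PowerSeries.coeff_mk]
      rw [hA1] at h1
      have hb : PowerSeries.constantCoeff B2 = 0 := by
        rcases mul_eq_zero.mp h1 with h | h
        · exact absurd h (hπ0 1)
        · exact (pow_eq_zero_iff hp.ne').mp h
      have h0 : PowerSeries.constantCoeff A * (PowerSeries.constantCoeff B2) ^ p =
          (PowerSeries.constantCoeff C2) ^ p := by
        have := congrArg PowerSeries.constantCoeff hrel2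
        simpa [map_mul, map_pow] using this
      rw [hb, zero_pow hp.ne', mul_zero] at h0
      have hc : PowerSeries.constantCoeff C2 = 0 := (pow_eq_zero_iff hp.ne').mp h0.symm
      exact ⟨by rw [hbi, hb], by rw [hci, hc]⟩
  rw [Qid, Ideal.span_le]
  rintro g ⟨i, rfl | rfl⟩
  · exact Ideal.Quotient.eq_zero_iff_mem.mp (key i).1
  · exact Ideal.Quotient.eq_zero_iff_mem.mp (key i).2

end KolchinAux

/-- **Failure of Kolchin's theorem in positive characteristic.**  Let `k` be algebraically
closed of characteristic `p > 0` and `f = x·y^p − z^p ∈ k[x,y,z]` (an irreducible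
polynomial).  Then in the arc algebra `A∞((f))`: (1) the ideal generated by the images of
all the variables `y⁽ⁱ⁾` and `z⁽ⁱ⁾` is a minimal prime — the set of arcs lying entirely in
the singular locus `y = z = 0` is an irreducible component of the arc space — and
(2) `Spec A∞((f))` is not an irreducible topological space. -/
theorem kolchin_fails_char_p (k : Type*) [Field k] [IsAlgClosed k] (p : ℕ) [CharP k p]
    (hp : 0 < p) (f : MvPolynomial (Fin 3) k)
    (hf : f = MvPolynomial.X 0 * MvPolynomial.X 1 ^ p - MvPolynomial.X 2 ^ p) :
    Ideal.span {a : ArcAlgebra (Ideal.span {f}) | ∃ i : ℕ,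
        a = Ideal.Quotient.mk (arcIdeal (Ideal.span {f})) (MvPolynomial.X ((1 : Fin 3), i)) ∨
        a = Ideal.Quotient.mk (arcIdeal (Ideal.span {f})) (MvPolynomial.X ((2 : Fin 3), i))} ∈
      minimalPrimes (ArcAlgebra (Ideal.span {f})) ∧
    ¬ IrreducibleSpace (PrimeSpectrum (ArcAlgebra (Ideal.span {f}))) := by
  classical
  open KolchinAux in
  have hpk : ((p : ℕ) : k) = 0 := CharP.cast_eq_zero k p
  set J := arcIdeal (Ideal.span {f}) with hJdef
  let mkq : MvPolynomial (Fin 3 × ℕ) k →+* ArcAlgebra (Ideal.span {f}) := Ideal.Quotient.mk J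
  have hJQ : J ≤ KolchinAux.Qid k := KolchinAux.arcIdeal_le_Qid p hp f hf
  have hJM : J ≤ KolchinAux.Mid k := KolchinAux.arcIdeal_le_Mid p hp f hf
  haveI hQprime : (KolchinAux.Qid k).IsPrime := KolchinAux.Qid_isPrime
  haveI hMprime : (KolchinAux.Mid k).IsPrime := KolchinAux.Mid_isPrime
  have hkersub : RingHom.ker mkq ≤ KolchinAux.Qid k := by
    rw [Ideal.mk_ker]; exact hJQ
  have hkersubM : RingHom.ker mkq ≤ KolchinAux.Mid k := by
    rw [Ideal.mk_ker]; exact hJM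
  have hQbarPrime : (Ideal.map mkq (KolchinAux.Qid k)).IsPrime :=
    Ideal.map_isPrime_of_surjective Ideal.Quotient.mk_surjective hkersub
  have hMbarPrime : (Ideal.map mkq (KolchinAux.Mid k)).IsPrime :=
    Ideal.map_isPrime_of_surjective Ideal.Quotient.mk_surjective hkersubM
  have hset : {a : ArcAlgebra (Ideal.span {f}) | ∃ i : ℕ,
        a = Ideal.Quotient.mk (arcIdeal (Ideal.span {f})) (MvPolynomial.X ((1 : Fin 3), i)) ∨
        a = Ideal.Quotient.mk (arcIdeal (Ideal.span {f})) (MvPolynomial.X ((2 : Fin 3), i))} =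
      mkq '' KolchinAux.genSet k := by
    ext a
    constructor
    · rintro ⟨i, rfl | rfl⟩
      · exact ⟨_, ⟨i, Or.inl rfl⟩, rfl⟩
      · exact ⟨_, ⟨i, Or.inr rfl⟩, rfl⟩
    · rintro ⟨g, ⟨i, rfl | rfl⟩, rfl⟩
      · exact ⟨i, Or.inl rfl⟩
      · exact ⟨i, Or.inr rfl⟩
  have hstated : Ideal.span {a : ArcAlgebra (Ideal.span {f}) | ∃ i : ℕ,
        a = Ideal.Quotient.mk (arcIdeal (Ideal.span {f})) (MvPolynomial.X ((1 : Fin 3), i)) ∨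
        a = Ideal.Quotient.mk (arcIdeal (Ideal.span {f})) (MvPolynomial.X ((2 : Fin 3), i))} =
      Ideal.map mkq (KolchinAux.Qid k) := by
    rw [hset, KolchinAux.Qid, Ideal.map_span]
  have hcomapQ : Ideal.comap mkq (Ideal.map mkq (KolchinAux.Qid k)) = KolchinAux.Qid k := by
    rw [Ideal.comap_map_of_surjective mkq Ideal.Quotient.mk_surjective,
      ← RingHom.ker_eq_comap_bot, Ideal.mk_ker]
    exact sup_eq_left.mpr hJQ
  have hcomapM : Ideal.comap mkq (Ideal.map mkq (KolchinAux.Mid k)) = KolchinAux.Mid k := by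
    rw [Ideal.comap_map_of_surjective mkq Ideal.Quotient.mk_surjective,
      ← RingHom.ker_eq_comap_bot, Ideal.mk_ker]
    exact sup_eq_left.mpr hJM
  have hmin : Ideal.map mkq (KolchinAux.Qid k) ∈
      minimalPrimes (ArcAlgebra (Ideal.span {f})) := by
    refine ⟨⟨hQbarPrime, bot_le⟩, ?_⟩
    rintro Pb ⟨hPb, -⟩ hle
    haveI := hPb
    have h1 : J ≤ Ideal.comap mkq Pb := by
      intro x hx
      show mkq x ∈ Pb
      have : mkq x = 0 := Ideal.Quotient.eq_zero_iff_mem.mpr hx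
      rw [this]; exact Pb.zero_mem
    have h2 : Ideal.comap mkq Pb ≤ KolchinAux.Qid k := by
      rw [← hcomapQ]; exact Ideal.comap_mono hle
    have h3 : KolchinAux.Qid k ≤ Ideal.comap mkq Pb :=
      KolchinAux.core p hp hpk f hf _ h1 h2
    calc Ideal.map mkq (KolchinAux.Qid k) ≤ Ideal.map mkq (Ideal.comap mkq Pb) :=
          Ideal.map_mono h3
      _ = Pb := Ideal.map_comap_of_surjective mkq Ideal.Quotient.mk_surjective Pb
  refine ⟨by rw [hstated]; exact hmin, ?_⟩
  intro hIrr
  have hnil : ((⊥ : Ideal (ArcAlgebra (Ideal.span {f}))).radical).IsPrime := by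
    rw [← PrimeSpectrum.isIrreducible_zeroLocus_iff, PrimeSpectrum.zeroLocus_bot]
    exact IrreducibleSpace.isIrreducible_univ _
  have hle1 : (⊥ : Ideal (ArcAlgebra (Ideal.span {f}))).radical ≤
      Ideal.map mkq (KolchinAux.Qid k) :=
    nilradical_le_prime _
  have hge : Ideal.map mkq (KolchinAux.Qid k) ≤
      (⊥ : Ideal (ArcAlgebra (Ideal.span {f}))).radical :=
    hmin.2 ⟨hnil, bot_le⟩ hle1
  have hle2 : (⊥ : Ideal (ArcAlgebra (Ideal.span {f}))).radical ≤
      Ideal.map mkq (KolchinAux.Mid k) :=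
    nilradical_le_prime _
  have hmemQ : mkq (MvPolynomial.X ((1 : Fin 3), 0)) ∈ Ideal.map mkq (KolchinAux.Qid k) :=
    Ideal.mem_map_of_mem mkq (Ideal.subset_span (by exact ⟨0, Or.inl rfl⟩))
  have hmemM : MvPolynomial.X ((1 : Fin 3), 0) ∈ KolchinAux.Mid k := by
    rw [← hcomapM]
    exact hle2 (hge hmemQ)
  exact KolchinAux.X10_not_mem_Mid hmemM
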